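/- arXiv:math/0106253 — 3 statements merged into one kernel-verified Lean document; each statement's English description precedes it below -/
import Mathlib

section
/- The pairing ω† := (V ⊗ V) ∘ Δ ∘ v⁻¹ : 𝟙 → A ⊗ A (defined like ω but with v and v⁻¹ exchanged) is the two-sided convolution inverse of ω: ω† * ω = ω * ω† = η ⊗ η, where the convolution of α, β : 𝟙 → A ⊗ A is α * β := (m ⊗ m) ∘ (id_A ⊗ c_{A,A} ⊗ id_A) ∘ (α ⊗ β). -/
open CategoryTheory Category MonoidalCategory

universe v u

private lemma aux_left {C : Type u} [Category.{v} C] [MonoidalCategory C]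
    {A : C} (m : A ⊗ A ⟶ A)
    (h_mul_assoc : (m ▷ A) ≫ m = (α_ A A A).hom ≫ (A ◁ m) ≫ m)
    (p : 𝟙_ C ⟶ A) :
    (((λ_ A).inv ≫ (p ▷ A) ≫ m) ▷ A) ≫ m = m ≫ (λ_ A).inv ≫ (p ▷ A) ≫ m := by
  have hc : ((λ_ A).inv ▷ A) ≫ (α_ (𝟙_ C) A A).hom = (λ_ (A ⊗ A)).inv := by
    monoidal_coherence
  rw [comp_whiskerRight, comp_whiskerRight, assoc, assoc, h_mul_assoc,
    associator_naturality_left_assoc, leftUnitor_inv_naturality_assoc,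
    whisker_exchange_assoc, reassoc_of% hc]

private lemma aux_right {C : Type u} [Category.{v} C] [MonoidalCategory C]
    {A : C} (m : A ⊗ A ⟶ A)
    (h_mul_assoc : (m ▷ A) ≫ m = (α_ A A A).hom ≫ (A ◁ m) ≫ m)
    (p : 𝟙_ C ⟶ A) :
    (A ◁ ((ρ_ A).inv ≫ (A ◁ p) ≫ m)) ≫ m = m ≫ (ρ_ A).inv ≫ (A ◁ p) ≫ m := by
  have hm : (A ◁ m) ≫ m = (α_ A A A).inv ≫ (m ▷ A) ≫ m := by
    rw [h_mul_assoc]; simp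
  have hc : (A ◁ (ρ_ A).inv) ≫ (α_ A A (𝟙_ C)).inv = (ρ_ (A ⊗ A)).inv := by
    monoidal_coherence
  rw [MonoidalCategory.whiskerLeft_comp, MonoidalCategory.whiskerLeft_comp, assoc, assoc, hm,
    associator_inv_naturality_right_assoc, rightUnitor_inv_naturality_assoc,
    ← whisker_exchange_assoc, reassoc_of% hc]

set_option maxHeartbeats 1600000 in
theorem pairing_convolution_inverse
    {C : Type u} [Category.{v} C] [MonoidalCategory C] [BraidedCategory C]
    (A : C) (m : A ⊗ A ⟶ A) (η : 𝟙_ C ⟶ A) (Δ : A ⟶ A ⊗ A) (ε : A ⟶ 𝟙_ C) (Γ : A ⟶ A)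
    (h_mul_assoc : (m ▷ A) ≫ m = (α_ A A A).hom ≫ (A ◁ m) ≫ m)
    (h_one_mul : (η ▷ A) ≫ m = (λ_ A).hom)
    (h_mul_one : (A ◁ η) ≫ m = (ρ_ A).hom)
    (h_comul_assoc : Δ ≫ (Δ ▷ A) ≫ (α_ A A A).hom = Δ ≫ (A ◁ Δ))
    (h_counit_left : Δ ≫ (ε ▷ A) = (λ_ A).inv)
    (h_counit_right : Δ ≫ (A ◁ ε) = (ρ_ A).inv)
    (h_compat : m ≫ Δ = (Δ ⊗ₘ Δ) ≫ tensorμ A A A A ≫ (m ⊗ₘ m))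
    (h_unit_comul : η ≫ Δ = (λ_ (𝟙_ C)).inv ≫ (η ⊗ₘ η))
    (h_mul_counit : m ≫ ε = (ε ⊗ₘ ε) ≫ (λ_ (𝟙_ C)).hom)
    (h_unit_counit : η ≫ ε = 𝟙 (𝟙_ C))
    (h_antipode_left : Δ ≫ (Γ ▷ A) ≫ m = ε ≫ η)
    (h_antipode_right : Δ ≫ (A ◁ Γ) ≫ m = ε ≫ η)
    (v vinv : 𝟙_ C ⟶ A)
    (h_v_central : (λ_ A).inv ≫ (v ▷ A) ≫ m = (ρ_ A).inv ≫ (A ◁ v) ≫ m)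
    (h_v_antipode : v ≫ Γ = v)
    (h_v_inv : (λ_ (𝟙_ C)).inv ≫ (v ⊗ₘ vinv) ≫ m = η)
    (h_inv_v : (λ_ (𝟙_ C)).inv ≫ (vinv ⊗ₘ v) ≫ m = η)
    (V W : A ⟶ A)
    (hV : V = (λ_ A).inv ≫ (v ▷ A) ≫ m)
    (hW : W = (λ_ A).inv ≫ (vinv ▷ A) ≫ m)
    (ω : 𝟙_ C ⟶ A ⊗ A)
    (hω : ω = v ≫ Δ ≫ (W ⊗ₘ W))
    (h_pairing : ω ≫ (A ◁ Δ) =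
      ω ≫ ((ρ_ A).inv ▷ A) ≫ ((A ◁ ω) ▷ A) ≫ ((α_ A A A).inv ▷ A) ≫ ((m ▷ A) ▷ A) ≫
        (α_ A A A).hom)
    (ωdag : 𝟙_ C ⟶ A ⊗ A)
    (hωdag : ωdag = vinv ≫ Δ ≫ (V ⊗ₘ V))
    : ((λ_ (𝟙_ C)).inv ≫ (ωdag ⊗ₘ ω) ≫ tensorμ A A A A ≫ (m ⊗ₘ m) = (λ_ (𝟙_ C)).inv ≫ (η ⊗ₘ η)) ∧
      ((λ_ (𝟙_ C)).inv ≫ (ω ⊗ₘ ωdag) ≫ tensorμ A A A A ≫ (m ⊗ₘ m) = (λ_ (𝟙_ C)).inv ≫ (η ⊗ₘ η)) := by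
  -- multiplication by V / W on the left commutes with m
  have hbV : (V ▷ A) ≫ m = m ≫ V := by rw [hV]; exact aux_left m h_mul_assoc v
  have hbW : (W ▷ A) ≫ m = m ≫ W := by rw [hW]; exact aux_left m h_mul_assoc vinv
  -- v ≫ W = η and vinv ≫ V = η
  have hvW : v ≫ W = η := by
    rw [hW, leftUnitor_inv_naturality_assoc, ← tensorHom_def'_assoc, h_inv_v]
  have hvV : vinv ≫ V = η := by
    rw [hV, leftUnitor_inv_naturality_assoc, ← tensorHom_def'_assoc, h_v_inv]
  -- V and W are mutually inverse
  have hVW : V ≫ W = 𝟙 A := by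
    conv_lhs => rw [hV]
    rw [assoc, assoc, ← hbW, ← comp_whiskerRight_assoc, hvW, h_one_mul]
    simp
  have hWV : W ≫ V = 𝟙 A := by
    conv_lhs => rw [hW]
    rw [assoc, assoc, ← hbV, ← comp_whiskerRight_assoc, hvV, h_one_mul]
    simp
  -- centrality: V also acts on the right
  have hVR : V = (ρ_ A).inv ≫ (A ◁ v) ≫ m := hV.trans h_v_central
  have hd : m ≫ V = (A ◁ V) ≫ m := by
    rw [hVR]; exact (aux_right m h_mul_assoc v).symm
  -- hence W is central as well
  have haW : (A ◁ W) ≫ m = m ≫ W := by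
    have h1 : (A ◁ W) ≫ m ≫ V = m := by
      rw [hd, ← MonoidalCategory.whiskerLeft_comp_assoc, hWV,
        MonoidalCategory.whiskerLeft_id, id_comp]
    calc (A ◁ W) ≫ m = ((A ◁ W) ≫ m ≫ V) ≫ W := by
          simp only [assoc, hVW, comp_id]
      _ = m ≫ W := by rw [h1]
  -- key cancellations
  have hVWm : (V ⊗ₘ W) ≫ m = m := by
    rw [MonoidalCategory.tensorHom_def, assoc, haW, ← assoc, hbV, assoc, hVW, comp_id]
  have hWVm : (W ⊗ₘ V) ≫ m = m := by
    rw [MonoidalCategory.tensorHom_def, assoc, ← hd, ← assoc, hbW, assoc, hWV, comp_id]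
  constructor
  · rw [hωdag, hω]
    calc (λ_ (𝟙_ C)).inv ≫ ((vinv ≫ Δ ≫ (V ⊗ₘ V)) ⊗ₘ (v ≫ Δ ≫ (W ⊗ₘ W))) ≫
          tensorμ A A A A ≫ (m ⊗ₘ m)
        = (λ_ (𝟙_ C)).inv ≫ (vinv ⊗ₘ v) ≫ (Δ ⊗ₘ Δ) ≫ ((V ⊗ₘ V) ⊗ₘ (W ⊗ₘ W)) ≫
            tensorμ A A A A ≫ (m ⊗ₘ m) := by
          simp only [← tensorHom_comp_tensorHom, assoc]
      _ = (λ_ (𝟙_ C)).inv ≫ (vinv ⊗ₘ v) ≫ (Δ ⊗ₘ Δ) ≫ tensorμ A A A A ≫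
            ((V ⊗ₘ W) ⊗ₘ (V ⊗ₘ W)) ≫ (m ⊗ₘ m) := by
          rw [tensorμ_natural_assoc]
      _ = (λ_ (𝟙_ C)).inv ≫ (vinv ⊗ₘ v) ≫ (Δ ⊗ₘ Δ) ≫ tensorμ A A A A ≫ (m ⊗ₘ m) := by
          rw [tensorHom_comp_tensorHom, hVWm]
      _ = (λ_ (𝟙_ C)).inv ≫ (vinv ⊗ₘ v) ≫ m ≫ Δ := by rw [← h_compat]
      _ = (λ_ (𝟙_ C)).inv ≫ (η ⊗ₘ η) := by rw [reassoc_of% h_inv_v, h_unit_comul]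
  · rw [hωdag, hω]
    calc (λ_ (𝟙_ C)).inv ≫ ((v ≫ Δ ≫ (W ⊗ₘ W)) ⊗ₘ (vinv ≫ Δ ≫ (V ⊗ₘ V))) ≫
          tensorμ A A A A ≫ (m ⊗ₘ m)
        = (λ_ (𝟙_ C)).inv ≫ (v ⊗ₘ vinv) ≫ (Δ ⊗ₘ Δ) ≫ ((W ⊗ₘ W) ⊗ₘ (V ⊗ₘ V)) ≫
            tensorμ A A A A ≫ (m ⊗ₘ m) := by
          simp only [← tensorHom_comp_tensorHom, assoc]
      _ = (λ_ (𝟙_ C)).inv ≫ (v ⊗ₘ vinv) ≫ (Δ ⊗ₘ Δ) ≫ tensorμ A A A A ≫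
            ((W ⊗ₘ V) ⊗ₘ (W ⊗ₘ V)) ≫ (m ⊗ₘ m) := by
          rw [tensorμ_natural_assoc]
      _ = (λ_ (𝟙_ C)).inv ≫ (v ⊗ₘ vinv) ≫ (Δ ⊗ₘ Δ) ≫ tensorμ A A A A ≫ (m ⊗ₘ m) := by
          rw [tensorHom_comp_tensorHom, hWVm]
      _ = (λ_ (𝟙_ C)).inv ≫ (v ⊗ₘ vinv) ≫ m ≫ Δ := by rw [← h_compat]
      _ = (λ_ (𝟙_ C)).inv ≫ (η ⊗ₘ η) := by rw [reassoc_of% h_v_inv, h_unit_comul]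
end

section
/- A Γ-invariant right integral μ on a Hopf monoid in a braided monoidal category is automatically a two-sided integral: it also satisfies the left integral equation (id_A ⊗ μ) ∘ Δ = η ∘ μ as morphisms A → A. -/
open CategoryTheory Category MonoidalCategory

universe v u

/-- Bundle the given Hopf monoid data into a `Hopf_ C` object. -/
noncomputable def RightIntegralAux.myHopf
    {C : Type u} [Category.{v} C] [MonoidalCategory C] [BraidedCategory C]
    (A : C) (m : A ⊗ A ⟶ A) (η : 𝟙_ C ⟶ A) (Δ : A ⟶ A ⊗ A) (ε : A ⟶ 𝟙_ C) (Γ : A ⟶ A)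
    (h_mul_assoc : (m ▷ A) ≫ m = (α_ A A A).hom ≫ (A ◁ m) ≫ m)
    (h_one_mul : (η ▷ A) ≫ m = (λ_ A).hom)
    (h_mul_one : (A ◁ η) ≫ m = (ρ_ A).hom)
    (h_comul_assoc : Δ ≫ (Δ ▷ A) ≫ (α_ A A A).hom = Δ ≫ (A ◁ Δ))
    (h_counit_left : Δ ≫ (ε ▷ A) = (λ_ A).inv)
    (h_counit_right : Δ ≫ (A ◁ ε) = (ρ_ A).inv)
    (h_compat : m ≫ Δ = (Δ ⊗ₘ Δ) ≫ tensorμ A A A A ≫ (m ⊗ₘ m))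
    (h_unit_comul : η ≫ Δ = (λ_ (𝟙_ C)).inv ≫ (η ⊗ₘ η))
    (h_mul_counit : m ≫ ε = (ε ⊗ₘ ε) ≫ (λ_ (𝟙_ C)).hom)
    (h_unit_counit : η ≫ ε = 𝟙 (𝟙_ C))
    (h_antipode_left : Δ ≫ (Γ ▷ A) ≫ m = ε ≫ η)
    (h_antipode_right : Δ ≫ (A ◁ Γ) ≫ m = ε ≫ η) : HopfObj A where
  one := η
  mul := m
  one_mul := h_one_mul
  mul_one := h_mul_one
  mul_assoc := h_mul_assoc
  counit := ε
  comul := Δ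
  counit_comul := h_counit_left
  comul_counit := h_counit_right
  comul_assoc := h_comul_assoc.symm
  mul_comul := h_compat
  one_comul := h_unit_comul
  mul_counit := by simpa using h_mul_counit
  one_counit := h_unit_counit
  antipode := Γ
  antipode_left := h_antipode_left
  antipode_right := h_antipode_right

theorem right_integral_is_two_sided
    {C : Type u} [Category.{v} C] [MonoidalCategory C] [BraidedCategory C]
    (A : C) (m : A ⊗ A ⟶ A) (η : 𝟙_ C ⟶ A) (Δ : A ⟶ A ⊗ A) (ε : A ⟶ 𝟙_ C) (Γ : A ⟶ A)
    (h_mul_assoc : (m ▷ A) ≫ m = (α_ A A A).hom ≫ (A ◁ m) ≫ m)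
    (h_one_mul : (η ▷ A) ≫ m = (λ_ A).hom)
    (h_mul_one : (A ◁ η) ≫ m = (ρ_ A).hom)
    (h_comul_assoc : Δ ≫ (Δ ▷ A) ≫ (α_ A A A).hom = Δ ≫ (A ◁ Δ))
    (h_counit_left : Δ ≫ (ε ▷ A) = (λ_ A).inv)
    (h_counit_right : Δ ≫ (A ◁ ε) = (ρ_ A).inv)
    (h_compat : m ≫ Δ = (Δ ⊗ₘ Δ) ≫ tensorμ A A A A ≫ (m ⊗ₘ m))
    (h_unit_comul : η ≫ Δ = (λ_ (𝟙_ C)).inv ≫ (η ⊗ₘ η))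
    (h_mul_counit : m ≫ ε = (ε ⊗ₘ ε) ≫ (λ_ (𝟙_ C)).hom)
    (h_unit_counit : η ≫ ε = 𝟙 (𝟙_ C))
    (h_antipode_left : Δ ≫ (Γ ▷ A) ≫ m = ε ≫ η)
    (h_antipode_right : Δ ≫ (A ◁ Γ) ≫ m = ε ≫ η)
    (μ : A ⟶ 𝟙_ C)
    (h_integral : Δ ≫ (μ ▷ A) ≫ (λ_ A).hom = μ ≫ η)
    (h_mu_antipode : Γ ≫ μ = μ)
    : Δ ≫ (A ◁ μ) ≫ (ρ_ A).hom = μ ≫ η := by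
  -- The antipode is an anti-comonoid morphism; extract this from mathlib's `Hopf_.antipode_comul`.
  have L0 : Γ ≫ Δ = Δ ≫ (β_ A A).hom ≫ (Γ ⊗ₘ Γ) :=
    @HopfObj.antipode_comul C _ _ _ A (RightIntegralAux.myHopf A m η Δ ε Γ h_mul_assoc h_one_mul h_mul_one
      h_comul_assoc h_counit_left h_counit_right h_compat h_unit_comul h_mul_counit
      h_unit_counit h_antipode_left h_antipode_right)
  -- `μ ∘ Γ = μ` is a left integral "on the opposite side":
  have L1 : Δ ≫ (Γ ⊗ₘ μ) ≫ (ρ_ A).hom = μ ≫ η := by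
    have e1 : Γ ≫ Δ ≫ (μ ▷ A) ≫ (λ_ A).hom = μ ≫ η := by
      rw [h_integral, reassoc_of% h_mu_antipode]
    rw [reassoc_of% L0] at e1
    rw [← e1]
    congr 1
    symm
    calc (β_ A A).hom ≫ (Γ ⊗ₘ Γ) ≫ μ ▷ A ≫ (λ_ A).hom
        = (β_ A A).hom ≫ ((Γ ≫ μ) ⊗ₘ Γ) ≫ (λ_ A).hom := by
          rw [← tensorHom_id, tensorHom_comp_tensorHom_assoc]; simp
      _ = (Γ ⊗ₘ (Γ ≫ μ)) ≫ (β_ A (𝟙_ C)).hom ≫ (λ_ A).hom := by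
          rw [BraidedCategory.braiding_naturality_assoc]
      _ = (Γ ⊗ₘ μ) ≫ (ρ_ A).hom := by rw [h_mu_antipode]; simp
  -- Main computation.
  have key : Δ ≫ (A ◁ (Δ ≫ (Γ ⊗ₘ μ) ≫ (ρ_ A).hom)) ≫ m = μ ≫ η := by
    calc Δ ≫ (A ◁ (Δ ≫ (Γ ⊗ₘ μ) ≫ (ρ_ A).hom)) ≫ m
        = Δ ≫ (Δ ▷ A) ≫ (α_ A A A).hom ≫ (A ◁ ((Γ ▷ A) ≫ (A ◁ μ) ≫ (ρ_ A).hom)) ≫ m := by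
          simp only [MonoidalCategory.whiskerLeft_comp, MonoidalCategory.tensorHom_def, Category.assoc]
          rw [← reassoc_of% h_comul_assoc]
      _ = Δ ≫ (Δ ▷ A) ≫ ((A ◁ Γ) ▷ A) ≫ (α_ A A A).hom ≫ (A ◁ ((A ◁ μ) ≫ (ρ_ A).hom)) ≫ m := by
          simp [associator_naturality_middle_assoc]
      _ = Δ ≫ (Δ ▷ A) ≫ ((A ◁ Γ) ▷ A) ≫ ((A ⊗ A) ◁ μ) ≫ (α_ A A (𝟙_ C)).hom ≫
            (A ◁ (ρ_ A).hom) ≫ m := by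
          simp [associator_naturality_right_assoc]
      _ = Δ ≫ (Δ ▷ A) ≫ ((A ◁ Γ) ▷ A) ≫ ((A ⊗ A) ◁ μ) ≫ (ρ_ (A ⊗ A)).hom ≫ m := by
          simp
      _ = Δ ≫ (Δ ▷ A) ≫ ((A ◁ Γ) ▷ A) ≫ ((A ⊗ A) ◁ μ) ≫ (m ▷ 𝟙_ C) ≫ (ρ_ A).hom := by
          rw [rightUnitor_naturality]
      _ = Δ ≫ (Δ ▷ A) ≫ ((A ◁ Γ) ▷ A) ≫ (m ▷ A) ≫ (A ◁ μ) ≫ (ρ_ A).hom := by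
          rw [whisker_exchange_assoc]
      _ = Δ ≫ ((Δ ≫ (A ◁ Γ) ≫ m) ▷ A) ≫ (A ◁ μ) ≫ (ρ_ A).hom := by
          simp
      _ = Δ ≫ (ε ▷ A) ≫ (η ▷ A) ≫ (A ◁ μ) ≫ (ρ_ A).hom := by
          rw [h_antipode_right]; simp
      _ = (λ_ A).inv ≫ (𝟙_ C ◁ μ) ≫ (η ▷ 𝟙_ C) ≫ (ρ_ A).hom := by
          rw [reassoc_of% h_counit_left, ← whisker_exchange_assoc]
      _ = μ ≫ (λ_ (𝟙_ C)).inv ≫ (ρ_ (𝟙_ C)).hom ≫ η := by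
          rw [leftUnitor_inv_naturality_assoc, rightUnitor_naturality]
      _ = μ ≫ η := by rw [← unitors_equal]; simp
  calc Δ ≫ (A ◁ μ) ≫ (ρ_ A).hom
      = Δ ≫ (A ◁ (μ ≫ η)) ≫ m := by
        simp only [MonoidalCategory.whiskerLeft_comp, Category.assoc, h_mul_one]
    _ = Δ ≫ (A ◁ (Δ ≫ (Γ ⊗ₘ μ) ≫ (ρ_ A).hom)) ≫ m := by rw [L1]
    _ = μ ≫ η := key
end

section
/- If ω is non-degenerate in the weak sense, then the dual integral λ := (id_A ⊗ μ) ∘ ω : 𝟙 → A is a two-sided integral element: m ∘ (id_A ⊗ λ) = λ ∘ ε = m ∘ (λ ⊗ id_A) as morphisms A → A. -/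
open CategoryTheory Category MonoidalCategory

universe v u

theorem dual_integral_is_two_sided_integral
    {C : Type u} [Category.{v} C] [MonoidalCategory C] [BraidedCategory C]
    (A : C) (m : A ⊗ A ⟶ A) (η : 𝟙_ C ⟶ A) (Δ : A ⟶ A ⊗ A) (ε : A ⟶ 𝟙_ C) (Γ : A ⟶ A)
    (h_mul_assoc : (m ▷ A) ≫ m = (α_ A A A).hom ≫ (A ◁ m) ≫ m)
    (h_one_mul : (η ▷ A) ≫ m = (λ_ A).hom)
    (h_mul_one : (A ◁ η) ≫ m = (ρ_ A).hom)
    (h_comul_assoc : Δ ≫ (Δ ▷ A) ≫ (α_ A A A).hom = Δ ≫ (A ◁ Δ))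
    (h_counit_left : Δ ≫ (ε ▷ A) = (λ_ A).inv)
    (h_counit_right : Δ ≫ (A ◁ ε) = (ρ_ A).inv)
    (h_compat : m ≫ Δ = (Δ ⊗ₘ Δ) ≫ tensorμ A A A A ≫ (m ⊗ₘ m))
    (h_unit_comul : η ≫ Δ = (λ_ (𝟙_ C)).inv ≫ (η ⊗ₘ η))
    (h_mul_counit : m ≫ ε = (ε ⊗ₘ ε) ≫ (λ_ (𝟙_ C)).hom)
    (h_unit_counit : η ≫ ε = 𝟙 (𝟙_ C))
    (h_antipode_left : Δ ≫ (Γ ▷ A) ≫ m = ε ≫ η)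
    (h_antipode_right : Δ ≫ (A ◁ Γ) ≫ m = ε ≫ η)
    (Γinv : A ⟶ A) (hΓinv : Γ ≫ Γinv = 𝟙 A) (hΓinv' : Γinv ≫ Γ = 𝟙 A)
    (v vinv : 𝟙_ C ⟶ A)
    (h_v_central : (λ_ A).inv ≫ (v ▷ A) ≫ m = (ρ_ A).inv ≫ (A ◁ v) ≫ m)
    (h_v_antipode : v ≫ Γ = v)
    (h_v_inv : (λ_ (𝟙_ C)).inv ≫ (v ⊗ₘ vinv) ≫ m = η)
    (h_inv_v : (λ_ (𝟙_ C)).inv ≫ (vinv ⊗ₘ v) ≫ m = η)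
    (V W : A ⟶ A)
    (hV : V = (λ_ A).inv ≫ (v ▷ A) ≫ m)
    (hW : W = (λ_ A).inv ≫ (vinv ▷ A) ≫ m)
    (ω : 𝟙_ C ⟶ A ⊗ A)
    (hω : ω = v ≫ Δ ≫ (W ⊗ₘ W))
    (h_pairing : ω ≫ (A ◁ Δ) =
      ω ≫ ((ρ_ A).inv ▷ A) ≫ ((A ◁ ω) ▷ A) ≫ ((α_ A A A).inv ▷ A) ≫ ((m ▷ A) ▷ A) ≫
        (α_ A A A).hom)
    (μ : A ⟶ 𝟙_ C)
    (h_integral : Δ ≫ (μ ▷ A) ≫ (λ_ A).hom = μ ≫ η)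
    (h_mu_antipode : Γ ≫ μ = μ)
    (h_nondeg : ∀ (X : C) (f g : A ⟶ X), ω ≫ (f ▷ A) = ω ≫ (g ▷ A) → f = g)
    (lam : 𝟙_ C ⟶ A) (hlam : lam = ω ≫ (A ◁ μ) ≫ (ρ_ A).hom)
    : ((ρ_ A).inv ≫ (A ◁ lam) ≫ m = ε ≫ lam) ∧ ((λ_ A).inv ≫ (lam ▷ A) ≫ m = ε ≫ lam) := by
  letI Amon : MonObj A :=
    { one := η, mul := m,
      one_mul := h_one_mul, mul_one := h_mul_one, mul_assoc := h_mul_assoc }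
  letI Acomon : ComonObj A :=
    { counit := ε, comul := Δ, counit_comul := h_counit_left,
      comul_counit := h_counit_right, comul_assoc := h_comul_assoc.symm }
  letI Abimon : BimonObj A :=
    { mul_comul := h_compat
      one_comul := h_unit_comul
      mul_counit := h_mul_counit
      one_counit := h_unit_counit }
  letI H : HopfObj A :=
    { antipode := Γ,
      antipode_left := h_antipode_left, antipode_right := h_antipode_right }
  have hΓΔ : Γ ≫ Δ = Δ ≫ (β_ A A).hom ≫ (Γ ⊗ₘ Γ) := HopfObj.antipode_comul A
  have hηΓ : η ≫ Γ = η := HopfObj.one_antipode A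
  -- q is the "insert ω and multiply" map from the pairing axiom's RHS
  set q : A ⟶ A ⊗ A := (ρ_ A).inv ≫ (A ◁ ω) ≫ (α_ A A A).inv ≫ (m ▷ A) with hq
  -- elements composed with q are left multiplication on ω's first leg
  have hq_elt : ∀ x : 𝟙_ C ⟶ A, x ≫ q = ω ≫ (((λ_ A).inv ≫ (x ▷ A) ≫ m) ▷ A) := by
    intro x
    rw [hq]
    slice_lhs 1 2 => rw [rightUnitor_inv_naturality]
    slice_lhs 2 3 => rw [← whisker_exchange]
    slice_lhs 3 4 => rw [associator_inv_naturality_left]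
    slice_lhs 4 5 => rw [← comp_whiskerRight]
    rw [← unitors_inv_equal]
    slice_lhs 1 2 => rw [← leftUnitor_inv_naturality]
    rw [leftUnitor_tensor_inv]
    simp only [Category.assoc, Iso.hom_inv_id_assoc, comp_whiskerRight]
  -- pairing axiom with a functional applied to the middle leg
  have pair_mid : ∀ φ : A ⟶ 𝟙_ C,
      ω ≫ (A ◁ (Δ ≫ (φ ▷ A) ≫ (λ_ A).hom)) = ω ≫ ((q ≫ (A ◁ φ) ≫ (ρ_ A).hom) ▷ A) := by
    intro φ
    have h := congrArg (fun t => t ≫ (A ◁ (φ ▷ A)) ≫ (A ◁ (λ_ A).hom)) h_pairing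
    simp only [Category.assoc] at h
    calc ω ≫ (A ◁ (Δ ≫ (φ ▷ A) ≫ (λ_ A).hom))
        = ω ≫ (A ◁ Δ) ≫ (A ◁ (φ ▷ A)) ≫ (A ◁ (λ_ A).hom) := by
          simp only [MonoidalCategory.whiskerLeft_comp, Category.assoc]
      _ = ω ≫ (ρ_ A).inv ▷ A ≫ (A ◁ ω) ▷ A ≫ (α_ A A A).inv ▷ A ≫ m ▷ A ▷ A ≫
            (α_ A A A).hom ≫ (A ◁ (φ ▷ A)) ≫ (A ◁ (λ_ A).hom) := h
      _ = ω ≫ (ρ_ A).inv ▷ A ≫ (A ◁ ω) ▷ A ≫ (α_ A A A).inv ▷ A ≫ m ▷ A ▷ A ≫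
            (A ◁ φ) ▷ A ≫ (α_ A (𝟙_ C) A).hom ≫ (A ◁ (λ_ A).hom) := by
          rw [← associator_naturality_middle_assoc]
      _ = ω ≫ ((q ≫ (A ◁ φ) ≫ (ρ_ A).hom) ▷ A) := by
          rw [MonoidalCategory.triangle]
          rw [hq]
          simp only [comp_whiskerRight, Category.assoc]
  -- evaluating q against a functional on the second leg
  have hqphi : ∀ φ : A ⟶ 𝟙_ C, q ≫ (A ◁ φ) ≫ (ρ_ A).hom
      = (ρ_ A).inv ≫ (A ◁ (ω ≫ (A ◁ φ) ≫ (ρ_ A).hom)) ≫ m := by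
    intro φ
    rw [hq]
    slice_lhs 4 5 => rw [← whisker_exchange]
    slice_lhs 3 4 => rw [← associator_inv_naturality_right]
    slice_lhs 5 6 => rw [rightUnitor_naturality]
    rw [rightUnitor_tensor_hom]
    simp only [MonoidalCategory.whiskerLeft_comp, Category.assoc, Iso.inv_hom_id_assoc]
  -- multiplying an element by the unit
  have unit_mul : ∀ x : 𝟙_ C ⟶ A, η ≫ (ρ_ A).inv ≫ (A ◁ x) ≫ m = x := by
    intro x
    rw [rightUnitor_inv_naturality_assoc]
    slice_lhs 2 3 => rw [← whisker_exchange]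
    slice_lhs 3 4 => rw [h_one_mul]
    slice_lhs 2 3 => rw [leftUnitor_naturality]
    rw [← unitors_inv_equal, Iso.inv_hom_id_assoc]
  -- pairing axiom with μ applied to the last leg
  have pair_last : ω ≫ (A ◁ (Δ ≫ (A ◁ μ) ≫ (ρ_ A).hom)) = lam ≫ q := by
    have h := congrArg (fun t => t ≫ (A ◁ (A ◁ μ)) ≫ (A ◁ (ρ_ A).hom)) h_pairing
    simp only [Category.assoc] at h
    calc ω ≫ (A ◁ (Δ ≫ (A ◁ μ) ≫ (ρ_ A).hom))
        = ω ≫ (A ◁ Δ) ≫ (A ◁ (A ◁ μ)) ≫ (A ◁ (ρ_ A).hom) := by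
          simp only [MonoidalCategory.whiskerLeft_comp, Category.assoc]
      _ = ω ≫ (ρ_ A).inv ▷ A ≫ (A ◁ ω) ▷ A ≫ (α_ A A A).inv ▷ A ≫ m ▷ A ▷ A ≫
            (α_ A A A).hom ≫ (A ◁ (A ◁ μ)) ≫ (A ◁ (ρ_ A).hom) := h
      _ = ω ≫ (ρ_ A).inv ▷ A ≫ (A ◁ ω) ▷ A ≫ (α_ A A A).inv ▷ A ≫ m ▷ A ▷ A ≫
            ((A ⊗ A) ◁ μ) ≫ (ρ_ (A ⊗ A)).hom := by
          rw [← associator_naturality_right_assoc, rightUnitor_tensor_hom]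
      _ = ω ≫ (A ◁ μ) ≫ (ρ_ A).inv ▷ 𝟙_ C ≫ (A ◁ ω) ▷ 𝟙_ C ≫ (α_ A A A).inv ▷ 𝟙_ C ≫
            (m ▷ A) ▷ 𝟙_ C ≫ (ρ_ (A ⊗ A)).hom := by
          slice_lhs 5 6 => rw [← whisker_exchange]
          slice_lhs 4 5 => rw [← whisker_exchange]
          slice_lhs 3 4 => rw [← whisker_exchange]
          slice_lhs 2 3 => rw [← whisker_exchange]
          simp only [Category.assoc]
      _ = ω ≫ (A ◁ μ) ≫ (ρ_ A).hom ≫ (ρ_ A).inv ≫ (A ◁ ω) ≫ (α_ A A A).inv ≫ (m ▷ A) := by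
          slice_lhs 6 7 => rw [rightUnitor_naturality]
          slice_lhs 5 6 => rw [rightUnitor_naturality]
          slice_lhs 4 5 => rw [rightUnitor_naturality]
          slice_lhs 3 4 => rw [rightUnitor_naturality]
          simp only [Category.assoc, Iso.inv_hom_id_assoc]
      _ = lam ≫ q := by rw [hlam, hq]; simp only [Category.assoc]
  -- sliding a scalar between left and right whiskering (uses the braiding)
  have slide : ∀ s : 𝟙_ C ⟶ 𝟙_ C,
      (λ_ A).inv ≫ (s ▷ A) ≫ (λ_ A).hom = (ρ_ A).inv ≫ (A ◁ s) ≫ (ρ_ A).hom := by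
    intro s
    have hβ : (λ_ A).inv ≫ (β_ (𝟙_ C) A).hom = (ρ_ A).inv := by
      rw [← cancel_mono (ρ_ A).hom]
      simp [braiding_rightUnitor]
    calc (λ_ A).inv ≫ (s ▷ A) ≫ (λ_ A).hom
        = (λ_ A).inv ≫ (s ▷ A) ≫ (β_ (𝟙_ C) A).hom ≫ (ρ_ A).hom := by
          rw [braiding_rightUnitor]
      _ = (λ_ A).inv ≫ (β_ (𝟙_ C) A).hom ≫ (A ◁ s) ≫ (ρ_ A).hom := by
          rw [BraidedCategory.braiding_naturality_left_assoc]
      _ = (ρ_ A).inv ≫ (A ◁ s) ≫ (ρ_ A).hom := by rw [← Category.assoc, hβ]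
  -- ε applied to W
  have hWe : W ≫ ε = ε ≫ (vinv ≫ ε) := by
    rw [hW]
    slice_lhs 3 4 => rw [h_mul_counit]
    rw [MonoidalCategory.tensorHom_def]
    slice_lhs 2 3 => rw [← comp_whiskerRight]
    slice_lhs 2 3 => rw [← whisker_exchange]
    slice_lhs 1 2 => rw [← leftUnitor_inv_naturality]
    rw [unitors_equal]
    slice_lhs 3 4 => rw [rightUnitor_naturality]
    rw [unitors_inv_equal, Iso.inv_hom_id_assoc]
  -- the two counit evaluations of ω agree
  have he2 : ω ≫ (A ◁ ε) ≫ (ρ_ A).hom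
      = v ≫ (ρ_ A).inv ≫ (A ◁ (vinv ≫ ε)) ≫ (ρ_ A).hom ≫ W := by
    rw [hω, MonoidalCategory.tensorHom_def]
    slice_lhs 4 5 => rw [← MonoidalCategory.whiskerLeft_comp, hWe,
      MonoidalCategory.whiskerLeft_comp]
    slice_lhs 3 4 => rw [← whisker_exchange]
    slice_lhs 2 3 => rw [h_counit_right]
    slice_lhs 3 4 => rw [← whisker_exchange]
    slice_lhs 4 5 => rw [rightUnitor_naturality]
  have he1 : ω ≫ (ε ▷ A) ≫ (λ_ A).hom
      = v ≫ (λ_ A).inv ≫ ((vinv ≫ ε) ▷ A) ≫ (λ_ A).hom ≫ W := by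
    rw [hω, MonoidalCategory.tensorHom_def]
    slice_lhs 4 5 => rw [whisker_exchange]
    slice_lhs 3 4 => rw [← comp_whiskerRight, hWe, comp_whiskerRight]
    slice_lhs 2 3 => rw [h_counit_left]
    slice_lhs 4 5 => rw [leftUnitor_naturality]
  have he12 : ω ≫ (ε ▷ A) ≫ (λ_ A).hom = ω ≫ (A ◁ ε) ≫ (ρ_ A).hom := by
    rw [he1, he2]
    slice_lhs 2 4 => rw [slide (vinv ≫ ε)]
    simp only [Category.assoc]
  -- via non-degeneracy: ε-evaluation of ω's second leg is η
  have hk : q ≫ (A ◁ ε) ≫ (ρ_ A).hom = 𝟙 A := by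
    apply h_nondeg
    have p := pair_mid ε
    rw [reassoc_of% h_counit_left] at p
    simp only [Iso.inv_hom_id, MonoidalCategory.whiskerLeft_id, Category.comp_id,
      id_whiskerRight] at p
    rw [id_whiskerRight, Category.comp_id]
    exact p.symm
  have he2n : ω ≫ (A ◁ ε) ≫ (ρ_ A).hom = η := by
    have h1 : η ≫ q = ω := by
      rw [hq_elt η, h_one_mul, Iso.inv_hom_id, id_whiskerRight, Category.comp_id]
    rw [← h1, Category.assoc, hk, Category.comp_id]
  have he1n : ω ≫ (ε ▷ A) ≫ (λ_ A).hom = η := he12.trans he2n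
  -- both relevant evaluations equal lam ⊗ η
  have hc1 : ω ≫ ((ε ≫ lam) ▷ A) = lam ≫ (ρ_ A).inv ≫ (A ◁ η) := by
    have h1 : ω ≫ (ε ▷ A) = η ≫ (λ_ A).inv := by
      rw [← he1n]; simp only [Category.assoc, Iso.hom_inv_id, Category.comp_id]
    rw [comp_whiskerRight, reassoc_of% h1]
    rw [leftUnitor_inv_naturality_assoc]
    slice_lhs 2 3 => rw [whisker_exchange]
    rw [unitors_inv_equal]
    slice_lhs 1 2 => rw [← rightUnitor_inv_naturality]
    simp only [Category.assoc]
  have hc2 : ω ≫ (A ◁ (μ ≫ η)) = lam ≫ (ρ_ A).inv ≫ (A ◁ η) := by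
    have h2 : ω ≫ (A ◁ μ) = lam ≫ (ρ_ A).inv := by
      rw [hlam]; simp only [Category.assoc, Iso.hom_inv_id, Category.comp_id]
    rw [MonoidalCategory.whiskerLeft_comp, reassoc_of% h2]
  -- Goal 1 : right multiplication by lam
  have g1 : (ρ_ A).inv ≫ (A ◁ lam) ≫ m = ε ≫ lam := by
    apply h_nondeg
    have p := pair_mid μ
    rw [h_integral, hqphi μ, ← hlam] at p
    rw [← p, hc1, hc2]
  -- the key fact : μ is in fact a two-sided integral evaluated on comultiplications
  have hP : Δ ≫ (A ◁ μ) ≫ (ρ_ A).hom = μ ≫ η := by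
    calc Δ ≫ (A ◁ μ) ≫ (ρ_ A).hom
        = Δ ≫ (A ◁ (Γ ≫ μ)) ≫ (ρ_ A).hom := by rw [h_mu_antipode]
      _ = Γinv ≫ (Γ ≫ Δ) ≫ (A ◁ Γ) ≫ (A ◁ μ) ≫ (ρ_ A).hom := by
          rw [← Category.assoc Γinv, ← Category.assoc Γinv, hΓinv', Category.id_comp,
            MonoidalCategory.whiskerLeft_comp]
          simp only [Category.assoc]
      _ = Γinv ≫ Δ ≫ (β_ A A).hom ≫ (Γ ▷ A) ≫ (A ◁ (Γ ≫ Γ ≫ μ)) ≫ (ρ_ A).hom := by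
          rw [hΓΔ, MonoidalCategory.tensorHom_def]
          simp only [MonoidalCategory.whiskerLeft_comp, Category.assoc]
      _ = Γinv ≫ Δ ≫ (β_ A A).hom ≫ (Γ ▷ A) ≫ (A ◁ μ) ≫ (ρ_ A).hom := by
          rw [h_mu_antipode, h_mu_antipode]
      _ = Γinv ≫ Δ ≫ (β_ A A).hom ≫ (A ◁ μ) ≫ (Γ ▷ 𝟙_ C) ≫ (ρ_ A).hom := by
          slice_lhs 4 5 => rw [← whisker_exchange]
          simp only [Category.assoc]
      _ = Γinv ≫ Δ ≫ (μ ▷ A) ≫ (β_ (𝟙_ C) A).hom ≫ (ρ_ A).hom ≫ Γ := by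
          rw [rightUnitor_naturality]
          slice_lhs 3 4 => rw [← BraidedCategory.braiding_naturality_left]
          simp only [Category.assoc]
      _ = Γinv ≫ (Δ ≫ (μ ▷ A) ≫ (λ_ A).hom) ≫ Γ := by
          slice_lhs 4 5 => rw [braiding_rightUnitor]
          simp only [Category.assoc]
      _ = μ ≫ η := by
          have hGm : Γinv ≫ μ = μ := by
            rw [← h_mu_antipode, ← Category.assoc, hΓinv', Category.id_comp, h_mu_antipode]
          rw [h_integral]
          simp only [Category.assoc]
          rw [hηΓ, ← Category.assoc, hGm]
  -- Goal 2 : left multiplication by lam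
  have g2 : (λ_ A).inv ≫ (lam ▷ A) ≫ m = ε ≫ lam := by
    apply h_nondeg
    have p := pair_last
    rw [hP, hq_elt lam] at p
    rw [← p, hc1, hc2]
  exact ⟨g1, g2⟩
end
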